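/- Let $\phi$ and $\omega$ be non-negative non-decreasing functions on an interval $(0,R_0]$. Suppose there are constants $C_1>0$ and $s>0$ such that $\omega(\lambda r)/\omega(r) \ge C_1 \lambda^s$ for all $0<\lambda\le 1$ and $0<r\le R_0$. Let $\beta<0$ and $\delta>0$, and suppose there exist a constant $A_1>1$ and a function $A_2:(0,\infty)\to(0,\infty)$ such that for every $0<r<R\le R_0$ and every $0<\varepsilon<1$, $\phi(r) \le A_1\,[\,(\omega(r)/\omega(R))\,(r/R)^{\beta+\delta} + \varepsilon\,]\,\phi(R) + A_2(\varepsilon)\,\omega(R)\,R^{\beta}$. Then there exist positive constants $C$ and $\varepsilon_0$, depending only on $C_1$, $s$, $A_1$, $\beta$, and $\delta$, such that for all $0<r<R\le R_0$, $\phi(r) \le C\,[\,(\omega(r)/\omega(R))\,(r/R)^{\beta}\,\phi(R) + A_2(\varepsilon_0)\,\omega(r)\,r^{\beta}\,]$. -/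
import Mathlib

set_option maxHeartbeats 1000000 in


/-- Giaquinta-type iteration lemma (Lemma 3.3 / Lemma 2.7 of Mäkäläinen-type) for
non-Ahlfors-regular measures. -/
theorem iteration_lemma
    (R₀ : ℝ) (hR₀ : 0 < R₀)
    (φ ω : ℝ → ℝ)
    (hφ0 : ∀ r, 0 < r → r ≤ R₀ → 0 ≤ φ r)
    (hω0 : ∀ r, 0 < r → r ≤ R₀ → 0 ≤ ω r)
    (hφmono : ∀ r₁ r₂, 0 < r₁ → r₁ ≤ r₂ → r₂ ≤ R₀ → φ r₁ ≤ φ r₂)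
    (hωmono : ∀ r₁ r₂, 0 < r₁ → r₁ ≤ r₂ → r₂ ≤ R₀ → ω r₁ ≤ ω r₂)
    (C₁ s : ℝ) (hC₁ : 0 < C₁) (hs : 0 < s)
    (hω : ∀ lam r, 0 < lam → lam ≤ 1 → 0 < r → r ≤ R₀ →
      C₁ * lam ^ s ≤ ω (lam * r) / ω r)
    (β δ : ℝ) (hβ : β < 0) (hδ : 0 < δ)
    (A₁ : ℝ) (hA₁ : 1 < A₁)
    (A₂ : ℝ → ℝ) (hA₂ : ∀ ε, 0 < ε → 0 < A₂ ε)
    (hmain : ∀ r R ε, 0 < r → r < R → R ≤ R₀ → 0 < ε → ε < 1 →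
      φ r ≤ A₁ * (ω r / ω R * (r / R) ^ (β + δ) + ε) * φ R + A₂ ε * ω R * R ^ β) :
    ∃ C ε₀ : ℝ, 0 < C ∧ 0 < ε₀ ∧
      ∀ r R, 0 < r → r < R → R ≤ R₀ →
        φ r ≤ C * (ω r / ω R * (r / R) ^ β * φ R + A₂ ε₀ * ω r * r ^ β) := by
  have hA₁0 : (0:ℝ) < A₁ := lt_trans one_pos hA₁
  -- ω is strictly positive on (0, R₀]
  have hωpos : ∀ r, 0 < r → r ≤ R₀ → 0 < ω r := by
    intro r hr hrR
    rcases (hω0 r hr hrR).lt_or_eq with h | h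
    · exact h
    · exfalso
      have h1 := hω 1 r one_pos le_rfl hr hrR
      rw [one_mul, ← h, div_zero] at h1
      have : (0:ℝ) < C₁ * (1:ℝ) ^ s := by
        rw [Real.one_rpow]; simpa using hC₁
      linarith
  -- the basic parameters
  set lam : ℝ := (4 * A₁) ^ (-(1/δ)) with hlam_def
  clear_value lam
  have h4A : (1:ℝ) < 4 * A₁ := by linarith
  have h4Apos : (0:ℝ) < 4 * A₁ := by linarith
  have hlam_pos : 0 < lam := hlam_def ▸ Real.rpow_pos_of_pos h4Apos _
  have hlam_lt1 : lam < 1 := by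
    rw [hlam_def]
    apply Real.rpow_lt_one_of_one_lt_of_neg h4A
    have : (0:ℝ) < 1/δ := by positivity
    linarith
  have hlam_le1 : lam ≤ 1 := le_of_lt hlam_lt1
  have hlamδ : lam ^ δ = (4 * A₁)⁻¹ := by
    rw [hlam_def, ← Real.rpow_mul (le_of_lt h4Apos), neg_mul,
      one_div, inv_mul_cancel₀ (ne_of_gt hδ), Real.rpow_neg_one]
  -- the smallness parameter
  set ε₀ : ℝ := min (C₁ * lam ^ (s + β + δ)) (1/2) with hε₀_def
  clear_value ε₀
  have hε₀pos : 0 < ε₀ := by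
    rw [hε₀_def]
    apply lt_min
    · exact mul_pos hC₁ (Real.rpow_pos_of_pos hlam_pos _)
    · norm_num
  have hε₀lt1 : ε₀ < 1 := by
    rw [hε₀_def]; exact lt_of_le_of_lt (min_le_right _ _) (by norm_num)
  set B : ℝ := A₂ ε₀ with hB_def
  clear_value B
  have hBpos : 0 < B := hB_def ▸ hA₂ _ hε₀pos
  -- the one-step estimate
  have step : ∀ R, 0 < R → R ≤ R₀ →
      φ (lam * R) ≤ (1/2) * (ω (lam * R) / ω R) * lam ^ β * φ R + B * ω R * R ^ β := by
    intro R hRpos hRle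
    have hlr : lam * R < R := by nlinarith
    have hlrpos : 0 < lam * R := mul_pos hlam_pos hRpos
    have hmain' := hmain (lam * R) R ε₀ hlrpos hlr hRle hε₀pos hε₀lt1
    have hdiv : (lam * R) / R = lam := by field_simp
    rw [hdiv, ← hB_def] at hmain'
    set q : ℝ := ω (lam * R) / ω R with hq_def
    have hqpos : 0 < q := div_pos (hωpos _ hlrpos (le_of_lt (lt_of_lt_of_le hlr hRle)))
      (hωpos _ hRpos hRle)
    have hqlb : C₁ * lam ^ s ≤ q := hω lam R hlam_pos hlam_le1 hRpos hRle
    have hεle : ε₀ ≤ q * lam ^ (β + δ) := by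
      have h1 : ε₀ ≤ C₁ * lam ^ (s + β + δ) := hε₀_def ▸ min_le_left _ _
      have h2 : lam ^ (s + β + δ) = lam ^ s * lam ^ (β + δ) := by
        rw [← Real.rpow_add hlam_pos]; ring_nf
      have h3 : (0:ℝ) < lam ^ (β + δ) := Real.rpow_pos_of_pos hlam_pos _
      calc ε₀ ≤ C₁ * lam ^ s * lam ^ (β + δ) := by rw [mul_assoc, ← h2]; exact h1
        _ ≤ q * lam ^ (β + δ) := by nlinarith
    have hsplit : lam ^ (β + δ) = lam ^ β * lam ^ δ := Real.rpow_add hlam_pos _ _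
    have hcoef : A₁ * (q * lam ^ (β + δ) + ε₀) ≤ (1/2) * q * lam ^ β := by
      have h3 : (0:ℝ) < lam ^ β := Real.rpow_pos_of_pos hlam_pos _
      have : A₁ * (q * lam ^ (β + δ) + ε₀) ≤ A₁ * (2 * (q * lam ^ (β + δ))) := by
        have := mul_pos hqpos (Real.rpow_pos_of_pos hlam_pos (β + δ))
        nlinarith
      calc A₁ * (q * lam ^ (β + δ) + ε₀) ≤ 2 * A₁ * (q * lam ^ (β + δ)) := by linarith
        _ = 2 * A₁ * lam ^ δ * (q * lam ^ β) := by rw [hsplit]; ring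
        _ = (1/2) * q * lam ^ β := by rw [hlamδ]; field_simp; ring
    have hφR : 0 ≤ φ R := hφ0 R hRpos hRle
    calc φ (lam * R) ≤ A₁ * (q * lam ^ (β + δ) + ε₀) * φ R + B * ω R * R ^ β := hmain'
      _ ≤ (1/2) * q * lam ^ β * φ R + B * ω R * R ^ β := by nlinarith
  -- the iterated estimate
  set K : ℝ := B * lam ^ (-(β + s)) / C₁ with hK_def
  clear_value K
  have hKpos : 0 < K := by
    rw [hK_def]
    apply div_pos (mul_pos hBpos (Real.rpow_pos_of_pos hlam_pos _)) hC₁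
  have iter : ∀ (k : ℕ) (R : ℝ), 0 < R → R ≤ R₀ →
      φ (lam ^ k * R) ≤ (ω (lam ^ k * R) / ω R) * (lam ^ k) ^ β * φ R
        + 2 * K * ω (lam ^ k * R) * (lam ^ k * R) ^ β := by
    intro k
    induction k with
    | zero =>
      intro R hRpos hRle
      simp only [pow_zero, one_mul]
      have h1 : ω R / ω R = 1 := div_self (ne_of_gt (hωpos R hRpos hRle))
      rw [h1, Real.one_rpow, one_mul, one_mul]
      have h2 : 0 < 2 * K * ω R * R ^ β :=
        mul_pos (mul_pos (mul_pos two_pos hKpos) (hωpos R hRpos hRle))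
          (Real.rpow_pos_of_pos hRpos β)
      linarith
    | succ k ih =>
      intro R hRpos hRle
      have hlk_pos : (0:ℝ) < lam ^ k := pow_pos hlam_pos k
      have hlk_le1 : lam ^ k ≤ 1 := pow_le_one₀ (le_of_lt hlam_pos) hlam_le1
      set Rk : ℝ := lam ^ k * R with hRk_def
      clear_value Rk
      have hRkpos : 0 < Rk := hRk_def ▸ mul_pos hlk_pos hRpos
      have hRkle : Rk ≤ R := by
        rw [hRk_def]
        have := mul_le_mul_of_nonneg_right hlk_le1 hRpos.le
        simpa using this
      have hRkR₀ : Rk ≤ R₀ := le_trans hRkle hRle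
      have hRk1 : lam ^ (k+1) * R = lam * Rk := by rw [hRk_def, pow_succ]; ring
      have hRk1pos : 0 < lam * Rk := mul_pos hlam_pos hRkpos
      have hRk1le : lam * Rk ≤ R₀ := by
        refine le_trans ?_ hRkR₀
        have := mul_le_mul_of_nonneg_right hlam_le1 hRkpos.le
        simpa using this
      have hstep := step Rk hRkpos hRkR₀
      have hih := ih R hRpos hRle
      rw [← hRk_def] at hih
      have hωR : 0 < ω R := hωpos R hRpos hRle
      have hωRk : 0 < ω Rk := hωpos Rk hRkpos hRkR₀
      have hωRk1 : 0 < ω (lam * Rk) := hωpos _ hRk1pos hRk1le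
      have hqlb : C₁ * lam ^ s * ω Rk ≤ ω (lam * Rk) := by
        have h := hω lam Rk hlam_pos hlam_le1 hRkpos hRkR₀
        have h2 := (le_div_iff₀ hωRk).mp h
        linarith
      have hlβ : (0:ℝ) < lam ^ β := Real.rpow_pos_of_pos hlam_pos β
      have hlkβ : (0:ℝ) < (lam ^ k) ^ β := Real.rpow_pos_of_pos hlk_pos β
      have hRkβ : (0:ℝ) < Rk ^ β := Real.rpow_pos_of_pos hRkpos β
      have hφR : 0 ≤ φ R := hφ0 R hRpos hRle
      -- multiply IH by the coefficient
      have hcoef_pos : 0 ≤ (1/2) * (ω (lam * Rk) / ω Rk) * lam ^ β := by positivity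
      have hmul : (1/2) * (ω (lam * Rk) / ω Rk) * lam ^ β * φ Rk
          ≤ (1/2) * (ω (lam * Rk) / ω Rk) * lam ^ β *
            ((ω Rk / ω R) * (lam ^ k) ^ β * φ R + 2 * K * ω Rk * Rk ^ β) :=
        mul_le_mul_of_nonneg_left hih hcoef_pos
      -- identities
      have hid1 : (1/2) * (ω (lam * Rk) / ω Rk) * lam ^ β *
            ((ω Rk / ω R) * (lam ^ k) ^ β * φ R)
          = (1/2) * (ω (lam * Rk) / ω R) * (lam ^ (k+1)) ^ β * φ R := by
        have hpow : (lam ^ (k+1) : ℝ) ^ β = lam ^ β * (lam ^ k) ^ β := by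
          rw [pow_succ, mul_comm (lam ^ k) lam,
            Real.mul_rpow (le_of_lt hlam_pos) (le_of_lt hlk_pos)]
        have hc : ω (lam * Rk) / ω Rk * (ω Rk / ω R) = ω (lam * Rk) / ω R :=
          div_mul_div_cancel₀ hωRk.ne'
        calc (1/2) * (ω (lam * Rk) / ω Rk) * lam ^ β * ((ω Rk / ω R) * (lam ^ k) ^ β * φ R)
            = (1/2) * (ω (lam * Rk) / ω Rk * (ω Rk / ω R)) * (lam ^ β * (lam ^ k) ^ β)
              * φ R := by ring
          _ = (1/2) * (ω (lam * Rk) / ω R) * (lam ^ (k+1)) ^ β * φ R := by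
              rw [hc, ← hpow]
      have hid2 : (1/2) * (ω (lam * Rk) / ω Rk) * lam ^ β * (2 * K * ω Rk * Rk ^ β)
          = K * ω (lam * Rk) * (lam * Rk) ^ β := by
        have hpow : (lam * Rk) ^ β = lam ^ β * Rk ^ β :=
          Real.mul_rpow (le_of_lt hlam_pos) (le_of_lt hRkpos)
        have hc : ω (lam * Rk) / ω Rk * ω Rk = ω (lam * Rk) :=
          div_mul_cancel₀ _ hωRk.ne'
        calc (1/2) * (ω (lam * Rk) / ω Rk) * lam ^ β * (2 * K * ω Rk * Rk ^ β)
            = K * (ω (lam * Rk) / ω Rk * ω Rk) * (lam ^ β * Rk ^ β) := by ring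
          _ = K * ω (lam * Rk) * (lam * Rk) ^ β := by rw [hc, ← hpow]
      have hthird : B * ω Rk * Rk ^ β ≤ K * ω (lam * Rk) * (lam * Rk) ^ β := by
        have hpow : (lam * Rk) ^ β = lam ^ β * Rk ^ β :=
          Real.mul_rpow (le_of_lt hlam_pos) (le_of_lt hRkpos)
        have hKval : K * lam ^ β = B * lam ^ (-s) / C₁ := by
          rw [hK_def]
          rw [div_mul_eq_mul_div, mul_assoc, ← Real.rpow_add hlam_pos]
          norm_num
        have hls : (0:ℝ) < lam ^ (-s) := Real.rpow_pos_of_pos hlam_pos _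
        have key : B * ω Rk ≤ B * lam ^ (-s) / C₁ * ω (lam * Rk) := by
          have hinv : lam ^ (-s) * lam ^ s = 1 := by
            rw [← Real.rpow_add hlam_pos]; norm_num
          have h2 : C₁ * lam ^ s * ω Rk ≤ ω (lam * Rk) := hqlb
          have h3 : B * (lam ^ (-s) / C₁) * (C₁ * lam ^ s * ω Rk)
              ≤ B * (lam ^ (-s) / C₁) * ω (lam * Rk) := by
            apply mul_le_mul_of_nonneg_left h2
            positivity
          calc B * ω Rk = B * (lam ^ (-s) * lam ^ s) * ((C₁ / C₁) * ω Rk) := by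
                rw [hinv, div_self (ne_of_gt hC₁)]; ring
            _ = B * (lam ^ (-s) / C₁) * (C₁ * lam ^ s * ω Rk) := by ring
            _ ≤ B * (lam ^ (-s) / C₁) * ω (lam * Rk) := h3
            _ = B * lam ^ (-s) / C₁ * ω (lam * Rk) := by ring
        calc B * ω Rk * Rk ^ β ≤ B * lam ^ (-s) / C₁ * ω (lam * Rk) * Rk ^ β :=
              mul_le_mul_of_nonneg_right key (le_of_lt hRkβ)
          _ = K * lam ^ β * ω (lam * Rk) * Rk ^ β := by rw [hKval]
          _ = K * ω (lam * Rk) * (lam ^ β * Rk ^ β) := by ring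
          _ = K * ω (lam * Rk) * (lam * Rk) ^ β := by rw [hpow]
      have hfirst_nonneg : 0 ≤ (1/2) * (ω (lam * Rk) / ω R) * (lam ^ (k+1)) ^ β * φ R := by
        have h1 : (0:ℝ) < (lam ^ (k+1) : ℝ) ^ β :=
          Real.rpow_pos_of_pos (pow_pos hlam_pos _) β
        have h2 : 0 ≤ ω (lam * Rk) / ω R := le_of_lt (div_pos hωRk1 hωR)
        have h3 : (0:ℝ) ≤ 1/2 := by norm_num
        exact mul_nonneg (mul_nonneg (mul_nonneg h3 h2) (le_of_lt h1)) hφR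
      rw [hRk1]
      calc φ (lam * Rk)
          ≤ (1/2) * (ω (lam * Rk) / ω Rk) * lam ^ β * φ Rk + B * ω Rk * Rk ^ β := hstep
        _ ≤ (1/2) * (ω (lam * Rk) / ω Rk) * lam ^ β *
              ((ω Rk / ω R) * (lam ^ k) ^ β * φ R + 2 * K * ω Rk * Rk ^ β)
            + B * ω Rk * Rk ^ β := by linarith
        _ = (1/2) * (ω (lam * Rk) / ω R) * (lam ^ (k+1)) ^ β * φ R
            + K * ω (lam * Rk) * (lam * Rk) ^ β + B * ω Rk * Rk ^ β := by
            rw [mul_add, hid1, hid2]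
        _ ≤ (ω (lam * Rk) / ω R) * (lam ^ (k+1)) ^ β * φ R
            + 2 * K * ω (lam * Rk) * (lam * Rk) ^ β := by
            have h := hfirst_nonneg
            linarith [hthird]
  -- conclusion
  obtain ⟨c, hc_def⟩ : ∃ x : ℝ, x = (C₁ * lam ^ s)⁻¹ := ⟨_, rfl⟩
  have hcpos : 0 < c := by
    rw [hc_def]
    exact inv_pos.mpr (mul_pos hC₁ (Real.rpow_pos_of_pos hlam_pos s))
  obtain ⟨d, hd_def⟩ : ∃ x : ℝ, x = 2 * lam ^ (-(β + s)) / C₁ * c := ⟨_, rfl⟩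
  have hdpos : 0 < d := by
    rw [hd_def]
    exact mul_pos (div_pos (mul_pos two_pos (Real.rpow_pos_of_pos hlam_pos _)) hC₁) hcpos
  have hKc : 2 * K * c = B * d := by rw [hK_def, hd_def]; ring
  refine ⟨c + d, ε₀, by linarith, hε₀pos, ?_⟩
  intro r R hr hrR hRle
  have hRpos : 0 < R := lt_trans hr hrR
  have hωR : 0 < ω R := hωpos R hRpos hRle
  have hrR₀ : r ≤ R₀ := le_trans (le_of_lt hrR) hRle
  have hωr : 0 < ω r := hωpos r hr hrR₀
  -- find the right scale
  have hex : ∃ n : ℕ, lam ^ (n + 1) * R < r := by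
    obtain ⟨n, hn⟩ := exists_pow_lt_of_lt_one (div_pos hr hRpos) hlam_lt1
    refine ⟨n, ?_⟩
    have h1 : lam ^ (n + 1) ≤ lam ^ n := by
      rw [pow_succ]
      nlinarith [pow_pos hlam_pos n]
    have h2 : lam ^ n * R < r := (lt_div_iff₀ hRpos).mp hn
    nlinarith [mul_le_mul_of_nonneg_right h1 (le_of_lt hRpos)]
  obtain ⟨k, hk, hrle⟩ : ∃ k : ℕ, lam ^ (k + 1) * R < r ∧ r ≤ lam ^ k * R := by
    refine ⟨Nat.find hex, Nat.find_spec hex, ?_⟩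
    rcases Nat.eq_zero_or_pos (Nat.find hex) with h0 | hpos
    · rw [h0]; simpa using le_of_lt hrR
    · obtain ⟨m, hm⟩ := Nat.exists_eq_succ_of_ne_zero (Nat.pos_iff_ne_zero.mp hpos)
      rw [hm]
      have h := Nat.find_min hex (m := m) (by omega)
      exact not_lt.mp h
  have hlk_pos : (0:ℝ) < lam ^ k := pow_pos hlam_pos k
  have hlk_le1 : lam ^ k ≤ 1 := pow_le_one₀ (le_of_lt hlam_pos) hlam_le1
  have hRkpos : 0 < lam ^ k * R := mul_pos hlk_pos hRpos
  have hRkle : lam ^ k * R ≤ R := by nlinarith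
  have hRkR₀ : lam ^ k * R ≤ R₀ := le_trans hRkle hRle
  have hφr : φ r ≤ φ (lam ^ k * R) := hφmono r _ hr hrle hRkR₀
  have hiter := iter k R hRpos hRle
  -- compare ω (lam^k R) with ω r
  have hωup : ω (lam ^ k * R) ≤ c * ω r := by
    have h1 : lam * (lam ^ k * R) = lam ^ (k + 1) * R := by rw [pow_succ]; ring
    have h2 := hω lam (lam ^ k * R) hlam_pos hlam_le1 hRkpos hRkR₀
    have h3 := (le_div_iff₀ (hωpos _ hRkpos hRkR₀)).mp h2
    rw [h1] at h3
    have h4 : ω (lam ^ (k + 1) * R) ≤ ω r := by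
      apply hωmono _ _ _ (le_of_lt hk) hrR₀
      rw [← h1]
      exact mul_pos hlam_pos hRkpos
    have h5 : C₁ * lam ^ s * ω (lam ^ k * R) ≤ ω r := le_trans h3 h4
    have h6 : 0 < C₁ * lam ^ s := mul_pos hC₁ (Real.rpow_pos_of_pos hlam_pos s)
    rw [hc_def, ← div_eq_inv_mul, le_div_iff₀ h6]
    linarith [h5]
  -- compare the powers
  have hrRdiv : 0 < r / R := div_pos hr hRpos
  have hrRk : r / R ≤ lam ^ k := (div_le_iff₀ hRpos).mpr hrle
  have hpow1 : ((lam ^ k : ℝ)) ^ β ≤ (r / R) ^ β :=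
    Real.rpow_le_rpow_of_nonpos hrRdiv hrRk (le_of_lt hβ)
  have hpow2 : (lam ^ k * R) ^ β ≤ r ^ β :=
    Real.rpow_le_rpow_of_nonpos hr hrle (le_of_lt hβ)
  have hφR : 0 ≤ φ R := hφ0 R hRpos hRle
  have hωRk : 0 < ω (lam ^ k * R) := hωpos _ hRkpos hRkR₀
  have hlkβ : (0:ℝ) < (lam ^ k : ℝ) ^ β := Real.rpow_pos_of_pos hlk_pos β
  have hRkβ : (0:ℝ) < (lam ^ k * R) ^ β := Real.rpow_pos_of_pos hRkpos β
  have hrβ : (0:ℝ) < r ^ β := Real.rpow_pos_of_pos hr β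
  -- bound the two terms
  have hterm1 : (ω (lam ^ k * R) / ω R) * (lam ^ k : ℝ) ^ β * φ R
      ≤ c * (ω r / ω R * (r / R) ^ β * φ R) := by
    have ha : ω (lam ^ k * R) / ω R ≤ (c * ω r) / ω R :=
      (div_le_div_iff_of_pos_right hωR).mpr hωup
    have hb : (ω (lam ^ k * R) / ω R) * (lam ^ k : ℝ) ^ β
        ≤ ((c * ω r) / ω R) * (r / R) ^ β := by
      apply mul_le_mul ha hpow1 (le_of_lt hlkβ)
      positivity
    calc (ω (lam ^ k * R) / ω R) * (lam ^ k : ℝ) ^ β * φ R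
        ≤ ((c * ω r) / ω R) * (r / R) ^ β * φ R :=
          mul_le_mul_of_nonneg_right hb hφR
      _ = c * (ω r / ω R * (r / R) ^ β * φ R) := by ring
  have hterm2 : 2 * K * ω (lam ^ k * R) * (lam ^ k * R) ^ β
      ≤ B * d * (ω r * r ^ β) := by
    have h2K : (0:ℝ) ≤ 2 * K := by linarith
    have hb : 2 * K * ω (lam ^ k * R) ≤ 2 * K * (c * ω r) :=
      mul_le_mul_of_nonneg_left hωup h2K
    calc 2 * K * ω (lam ^ k * R) * (lam ^ k * R) ^ β
        ≤ 2 * K * (c * ω r) * r ^ β := by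
          apply mul_le_mul hb hpow2 (le_of_lt hRkβ)
          positivity
      _ = (2 * K * c) * (ω r * r ^ β) := by ring
      _ = B * d * (ω r * r ^ β) := by rw [hKc]
  -- put everything together
  have hT1 : 0 ≤ ω r / ω R * (r / R) ^ β * φ R := by
    have : (0:ℝ) < (r / R) ^ β := Real.rpow_pos_of_pos hrRdiv β
    positivity
  have hX : 0 ≤ B * (ω r * r ^ β) := by positivity
  have hfinal : φ r ≤ c * (ω r / ω R * (r / R) ^ β * φ R) + B * d * (ω r * r ^ β) := by
    calc φ r ≤ φ (lam ^ k * R) := hφr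
      _ ≤ (ω (lam ^ k * R) / ω R) * (lam ^ k : ℝ) ^ β * φ R
          + 2 * K * ω (lam ^ k * R) * (lam ^ k * R) ^ β := hiter
      _ ≤ c * (ω r / ω R * (r / R) ^ β * φ R) + B * d * (ω r * r ^ β) := by
          linarith [hterm1, hterm2]
  rw [← hB_def]
  have e1 : 0 ≤ d * (ω r / ω R * (r / R) ^ β * φ R) := mul_nonneg (le_of_lt hdpos) hT1
  have e2 : 0 ≤ c * (B * (ω r * r ^ β)) := mul_nonneg (le_of_lt hcpos) hX
  calc φ r ≤ c * (ω r / ω R * (r / R) ^ β * φ R) + B * d * (ω r * r ^ β) := hfinal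
    _ ≤ c * (ω r / ω R * (r / R) ^ β * φ R) + B * d * (ω r * r ^ β)
        + (d * (ω r / ω R * (r / R) ^ β * φ R) + c * (B * (ω r * r ^ β))) := by linarith
    _ = (c + d) * (ω r / ω R * (r / R) ^ β * φ R + B * ω r * r ^ β) := by ring
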